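/- arXiv:2502.02450 — 4 statements merged into one kernel-verified Lean document; each statement's English description precedes it below -/
import Mathlib

section
/- Let n, m be finite index types, let P be an n×n positive-definite real matrix, R an m×m positive-definite real matrix, H an m×n real matrix, and let m₀ ∈ ℝⁿ, v ∈ ℝᵐ. Set Λ := P⁻¹ + Hᵀ R⁻¹ H (which is positive definite, hence invertible) and μ := Λ⁻¹ (P⁻¹ m₀ + Hᵀ v). Then for every z ∈ ℝⁿ, exp(−(1/2)·(z − m₀)ᵀ P⁻¹ (z − m₀)) · exp(−(1/2)·((H z)ᵀ R⁻¹ (H z) − 2 (H z)ᵀ v)) = exp((1/2)·μᵀ Λ μ − (1/2)·m₀ᵀ P⁻¹ m₀) · exp(−(1/2)·(z − μ)ᵀ Λ (z − μ)). In other words, the generalised Bayes update of a Gaussian density by the exponential of a quadratic loss is (up to a constant independent of z) again a Gaussian density with precision Λ and mean μ. -/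
open Matrix

private lemma dot_symm {n : Type*} [Fintype n] (A : Matrix n n ℝ) (hA : Aᵀ = A)
    (x y : n → ℝ) : x ⬝ᵥ A *ᵥ y = y ⬝ᵥ A *ᵥ x := by
  rw [← hA, dotProduct_mulVec, vecMul_transpose, dotProduct_comm, hA]

private lemma dot_trans {n m : Type*} [Fintype n] [Fintype m] (H : Matrix m n ℝ)
    (z : n → ℝ) (w : m → ℝ) : z ⬝ᵥ Hᵀ *ᵥ w = (H *ᵥ z) ⬝ᵥ w := by
  rw [dotProduct_mulVec, vecMul_transpose]

/-- **Generalised-Bayes Gaussian update (Proposition 3.1 core computation).**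
Updating a Gaussian density with precision `P⁻¹` and mean `m₀` by the exponential of the
quadratic loss `(1/2)((Hz)ᵀR⁻¹(Hz) − 2(Hz)ᵀv)` yields, up to a constant independent of `z`,
a Gaussian density with precision `Λ = P⁻¹ + HᵀR⁻¹H` and mean `μ = Λ⁻¹(P⁻¹m₀ + Hᵀv)`. -/
theorem stmt0 {n m : Type*} [Fintype n] [Fintype m] [DecidableEq n] [DecidableEq m]
    (P : Matrix n n ℝ) (hP : P.PosDef) (R : Matrix m m ℝ) (hR : R.PosDef)
    (H : Matrix m n ℝ) (m₀ : n → ℝ) (v : m → ℝ)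
    (Λ : Matrix n n ℝ) (hΛ : Λ = P⁻¹ + Hᵀ * R⁻¹ * H)
    (μ : n → ℝ) (hμ : μ = Λ⁻¹.mulVec (P⁻¹.mulVec m₀ + Hᵀ.mulVec v)) :
    Λ.PosDef ∧ IsUnit Λ.det ∧
    ∀ z : n → ℝ,
      Real.exp (-(1/2) * ((z - m₀) ⬝ᵥ P⁻¹.mulVec (z - m₀))) *
        Real.exp (-(1/2) * ((H.mulVec z) ⬝ᵥ R⁻¹.mulVec (H.mulVec z)
            - 2 * ((H.mulVec z) ⬝ᵥ v))) =
      Real.exp ((1/2) * (μ ⬝ᵥ Λ.mulVec μ) - (1/2) * (m₀ ⬝ᵥ P⁻¹.mulVec m₀)) *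
        Real.exp (-(1/2) * ((z - μ) ⬝ᵥ Λ.mulVec (z - μ))) := by
  have hPinv := hP.inv
  have hcon : (Hᵀ * R⁻¹ * H).PosSemidef := by
    have h := hR.inv.posSemidef.conjTranspose_mul_mul_same H
    simpa [conjTranspose_eq_transpose_of_trivial] using h
  have hΛpd : Λ.PosDef := hΛ ▸ hPinv.add_posSemidef hcon
  have hdet : IsUnit Λ.det := hΛpd.det_pos.ne'.isUnit
  refine ⟨hΛpd, hdet, fun z => ?_⟩
  -- symmetry facts
  have hPsym : (P⁻¹)ᵀ = P⁻¹ := by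
    have := hPinv.isHermitian
    rwa [IsHermitian, conjTranspose_eq_transpose_of_trivial] at this
  have hΛsym : Λᵀ = Λ := by
    have := hΛpd.isHermitian
    rwa [IsHermitian, conjTranspose_eq_transpose_of_trivial] at this
  have hΛμ : Λ *ᵥ μ = P⁻¹ *ᵥ m₀ + Hᵀ *ᵥ v := by
    rw [hμ, mulVec_mulVec, Matrix.mul_nonsing_inv Λ hdet, one_mulVec]
  rw [← Real.exp_add, ← Real.exp_add]
  congr 1
  have e1 : (H *ᵥ z) ⬝ᵥ R⁻¹ *ᵥ (H *ᵥ z) = z ⬝ᵥ (Hᵀ * R⁻¹ * H) *ᵥ z := by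
    rw [← mulVec_mulVec, ← mulVec_mulVec, dot_trans]
  have e2 : (H *ᵥ z) ⬝ᵥ v = z ⬝ᵥ Hᵀ *ᵥ v := (dot_trans H z v).symm
  have e3 : z ⬝ᵥ P⁻¹ *ᵥ m₀ = m₀ ⬝ᵥ P⁻¹ *ᵥ z := dot_symm _ hPsym z m₀
  have hCsym : (Hᵀ * R⁻¹ * H)ᵀ = Hᵀ * R⁻¹ * H := by
    have := hcon.isHermitian
    rwa [IsHermitian, conjTranspose_eq_transpose_of_trivial] at this
  have s1 : z ⬝ᵥ P⁻¹ *ᵥ μ = μ ⬝ᵥ P⁻¹ *ᵥ z := dot_symm _ hPsym z μ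
  have s2 : z ⬝ᵥ (Hᵀ * R⁻¹ * H) *ᵥ μ = μ ⬝ᵥ (Hᵀ * R⁻¹ * H) *ᵥ z := dot_symm _ hCsym z μ
  have h6 := congrArg (fun w => z ⬝ᵥ w) hΛμ
  have h7 := congrArg (fun w => μ ⬝ᵥ w) hΛμ
  simp only [hΛ, add_mulVec, dotProduct_add] at h6 h7
  simp only [sub_dotProduct, dotProduct_sub, mulVec_sub, dotProduct_add, add_mulVec, hΛ]
  linarith [e1, e2, e3, s1, s2, h6, h7]
end

section
/- Let n, m be finite index types, let P be an n×n positive-definite real matrix, H an m×n real matrix, m₀ ∈ ℝⁿ, σ > 0, and for a positive-definite d×d matrix Σ and vectors x, μ ∈ ℝᵈ write N(x; μ, Σ) := (det(2π Σ))^(−1/2) · exp(−(1/2)(x − μ)ᵀ Σ⁻¹ (x − μ)). Then for every y ∈ ℝᵐ, ∫_{ℝⁿ} N(y; H z, σ² Iₘ) · N(z; m₀, P) dz = N(y; H m₀, H P Hᵀ + σ² Iₘ), where Iₘ is the m×m identity matrix and the integral is with respect to Lebesgue measure on ℝⁿ. -/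
open Matrix MeasureTheory
open Real
open scoped MatrixOrder



lemma integral_comp_mulVec {n : Type*} [Fintype n] [DecidableEq n]
    (C : Matrix n n ℝ) (hC : C.det ≠ 0) (g : (n → ℝ) → ℝ) (hg : Measurable g) :
    ∫ z : n → ℝ, g (C.mulVec z) = |C.det|⁻¹ * ∫ z : n → ℝ, g z := by
  have hdet : LinearMap.det (Matrix.toLin' C) ≠ 0 := by
    rwa [LinearMap.det_toLin']
  have hmap := Measure.map_linearMap_addHaar_pi_eq_smul_addHaar (f := Matrix.toLin' C) hdet
    (volume : Measure (n → ℝ))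
  have hmeas : Measurable (fun z : n → ℝ => C.mulVec z) :=
    (Matrix.toLin' C).continuous_of_finiteDimensional.measurable
  calc ∫ z : n → ℝ, g (C.mulVec z)
      = ∫ z, g z ∂(Measure.map (fun z : n → ℝ => C.mulVec z) volume) := by
        rw [integral_map hmeas.aemeasurable hg.aestronglyMeasurable]
    _ = |C.det|⁻¹ * ∫ z : n → ℝ, g z := by
        have : (fun z : n → ℝ => C.mulVec z) = ⇑(Matrix.toLin' C) := by
          ext z i; simp [Matrix.toLin'_apply]
        rw [this, hmap, integral_smul_measure, LinearMap.det_toLin']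
        rw [ENNReal.toReal_ofReal (by positivity), abs_inv]
        simp [smul_eq_mul]

lemma integral_exp_neg_half_sum_sq {n : Type*} [Fintype n] :
    ∫ z : n → ℝ, Real.exp (-(1/2) * (z ⬝ᵥ z)) = Real.sqrt ((2 * π) ^ Fintype.card n) := by
  have h1 : ∀ z : n → ℝ, Real.exp (-(1/2) * (z ⬝ᵥ z)) =
      ∏ i, Real.exp (-(1/2) * (z i)^2) := by
    intro z
    rw [← Real.exp_sum]
    congr 1
    rw [dotProduct, Finset.mul_sum]
    congr 1; ext i; ring
  simp_rw [h1]
  rw [volume_pi, integral_fintype_prod_eq_pow (ι := n) (f := fun x : ℝ => Real.exp (-(1/2) * x^2))]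
  have : ∀ x : ℝ, Real.exp (-(1/2) * x^2) = Real.exp (-(1/2 : ℝ) * x^2) := fun _ => rfl
  rw [show (∫ x : ℝ, Real.exp (-(1/2) * x^2)) = Real.sqrt (π / (1/2)) from integral_gaussian (1/2)]
  rw [show π / (1/2) = 2 * π by ring]
  induction (Fintype.card n) with
  | zero => simp
  | succ k ih => rw [pow_succ, pow_succ, ih, ← Real.sqrt_mul (by positivity)]

lemma integral_exp_neg_half_quad {n : Type*} [Fintype n] [DecidableEq n]
    (A : Matrix n n ℝ) (hA : A.PosDef) :
    ∫ z : n → ℝ, Real.exp (-(1/2) * (z ⬝ᵥ A.mulVec z)) =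
      Real.sqrt ((2 * π) ^ Fintype.card n / A.det) := by
  have hAdet : A.det ≠ 0 := hA.det_pos.ne'
  have hAinv : (A⁻¹).PosDef := hA.inv
  set C := CFC.sqrt (A⁻¹) with hCdef
  have hCsq : C * C = A⁻¹ := CFC.sqrt_mul_sqrt_self _ hAinv.posSemidef.nonneg
  have hCpsd : C.PosSemidef := (CFC.sqrt_nonneg _).posSemidef
  have hCsymm : Cᵀ = C := by
    have := hCpsd.1
    rwa [Matrix.IsHermitian, Matrix.conjTranspose_eq_transpose_of_trivial] at this
  have hAsymm : Aᵀ = A := by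
    have := hA.1
    rwa [Matrix.IsHermitian, Matrix.conjTranspose_eq_transpose_of_trivial] at this
  have hCdet_sq : C.det * C.det = A.det⁻¹ := by
    rw [← Matrix.det_mul, hCsq, Matrix.det_nonsing_inv, Ring.inverse_eq_inv]
  have hCdet_ne : C.det ≠ 0 := by
    intro h
    rw [h, mul_zero] at hCdet_sq
    exact hAdet (inv_eq_zero.mp hCdet_sq.symm)
  have hCinv : C⁻¹ * C⁻¹ = A := by
    rw [← Matrix.mul_inv_rev, hCsq,
      Matrix.nonsing_inv_nonsing_inv _ (isUnit_iff_ne_zero.mpr hAdet)]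
  have hCAC : C * A * C = 1 := by
    rw [← hCinv, ← Matrix.mul_assoc, Matrix.mul_assoc C C⁻¹ C⁻¹,
      ← Matrix.mul_assoc C C⁻¹ _, Matrix.mul_nonsing_inv _ (isUnit_iff_ne_zero.mpr hCdet_ne),
      Matrix.one_mul, Matrix.nonsing_inv_mul _ (isUnit_iff_ne_zero.mpr hCdet_ne)]
  have hg : Measurable (fun z : n → ℝ => Real.exp (-(1/2) * (z ⬝ᵥ A.mulVec z))) := by
    have hc : Continuous (fun z : n → ℝ => z ⬝ᵥ A.mulVec z) := by
      simp only [dotProduct, Matrix.mulVec]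
      continuity
    exact (Real.continuous_exp.comp (continuous_const.mul hc)).measurable
  have key := integral_comp_mulVec C hCdet_ne _ hg
  have hsub : ∀ z : n → ℝ, (C.mulVec z) ⬝ᵥ A.mulVec (C.mulVec z) = z ⬝ᵥ z := by
    intro z
    rw [Matrix.mulVec_mulVec, Matrix.dotProduct_mulVec, ← Matrix.mulVec_transpose,
      Matrix.mulVec_mulVec, Matrix.transpose_mul, hCsymm, hAsymm, hCAC]
    simp
  simp_rw [hsub] at key
  rw [integral_exp_neg_half_sum_sq] at key
  have habs : |C.det| = Real.sqrt A.det⁻¹ := by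
    rw [← hCdet_sq, Real.sqrt_mul_self_eq_abs]
  have := key
  -- key : sqrt((2π)^card) = |det C|⁻¹ * ∫ ...
  have hI : ∫ z : n → ℝ, Real.exp (-(1/2) * (z ⬝ᵥ A.mulVec z)) =
      |C.det| * Real.sqrt ((2 * π) ^ Fintype.card n) := by
    rw [key, ← mul_assoc, mul_inv_cancel₀ (by simpa using hCdet_ne), one_mul]
  rw [hI, habs, ← Real.sqrt_mul (inv_nonneg.mpr hA.det_pos.le), div_eq_mul_inv, mul_comm]

lemma posSemidef_smul_real {k : Type*} [Fintype k] {M : Matrix k k ℝ}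
    (h : M.PosSemidef) {c : ℝ} (hc : 0 ≤ c) : (c • M).PosSemidef := by
  refine ⟨?_, fun x => ?_⟩
  · unfold Matrix.IsHermitian
    rw [Matrix.conjTranspose_smul, h.1.eq]
    simp
  · exact (h.smul hc).2 x

lemma posDef_smul_one {k : Type*} [Fintype k] [DecidableEq k] {c : ℝ} (hc : 0 < c) :
    (c • (1 : Matrix k k ℝ)).PosDef := by
  refine ⟨?_, fun x hx => ?_⟩
  · unfold Matrix.IsHermitian
    rw [Matrix.conjTranspose_smul]
    simp
  · exact (Matrix.PosDef.one.smul hc).2 hx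

/-- The multivariate Gaussian density `N(x; μ, Σ) = det(2πΣ)^{-1/2} exp(−½(x−μ)ᵀΣ⁻¹(x−μ))`. -/
noncomputable def gaussianDensityN {d : Type*} [Fintype d] [DecidableEq d]
    (x μ : d → ℝ) (S : Matrix d d ℝ) : ℝ :=
  (((2 * Real.pi) • S).det) ^ (-(1 : ℝ) / 2) *
    Real.exp (-(1 / 2) * ((x - μ) ⬝ᵥ S⁻¹.mulVec (x - μ)))

/-- **Closed-form one-step-ahead predictive (Proposition 3.1).**
`∫ N(y; Hz, σ²I) N(z; m₀, P) dz = N(y; Hm₀, HPHᵀ + σ²I)`. -/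
theorem stmt1 {n m : Type*} [Fintype n] [Fintype m] [DecidableEq n] [DecidableEq m]
    (P : Matrix n n ℝ) (hP : P.PosDef) (H : Matrix m n ℝ) (m₀ : n → ℝ)
    (σ : ℝ) (hσ : 0 < σ) (y : m → ℝ) :
    ∫ z : n → ℝ,
        gaussianDensityN y (H.mulVec z) (σ ^ 2 • (1 : Matrix m m ℝ)) *
          gaussianDensityN z m₀ P =
      gaussianDensityN y (H.mulVec m₀) (H * P * Hᵀ + σ ^ 2 • (1 : Matrix m m ℝ)) := by
  set c : ℝ := σ ^ 2 with hcdef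
  have hc : 0 < c := by positivity
  -- basic symmetric/posdef facts
  have hPsymm : Pᵀ = P := by
    have := hP.1; rwa [Matrix.IsHermitian, Matrix.conjTranspose_eq_transpose_of_trivial] at this
  have hPdet : IsUnit P.det := isUnit_iff_ne_zero.mpr hP.det_pos.ne'
  have hHtH : (Hᵀ * H).PosSemidef := by
    have := Matrix.posSemidef_conjTranspose_mul_self H
    rwa [Matrix.conjTranspose_eq_transpose_of_trivial] at this
  set A : Matrix n n ℝ := P⁻¹ + c⁻¹ • (Hᵀ * H) with hAdef
  have hA : A.PosDef := hP.inv.add_posSemidef (posSemidef_smul_real hHtH (by positivity))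
  have hAdet : IsUnit A.det := isUnit_iff_ne_zero.mpr hA.det_pos.ne'
  have hAsymm : Aᵀ = A := by
    rw [hAdef, Matrix.transpose_add, Matrix.transpose_smul, Matrix.transpose_nonsing_inv,
      hPsymm, Matrix.transpose_mul, Matrix.transpose_transpose]
  set S : Matrix m m ℝ := H * P * Hᵀ + c • 1 with hSdef
  have hS : S.PosDef := by
    rw [hSdef, add_comm]
    refine (posDef_smul_one hc).add_posSemidef ?_
    have := hP.posSemidef.mul_mul_conjTranspose_same H
    rwa [Matrix.conjTranspose_eq_transpose_of_trivial] at this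
  have hSdet : IsUnit S.det := isUnit_iff_ne_zero.mpr hS.det_pos.ne'
  -- inverse of c • 1
  have hcinv : (c • (1 : Matrix m m ℝ))⁻¹ = c⁻¹ • 1 := by
    apply Matrix.inv_eq_right_inv
    rw [Matrix.smul_mul, Matrix.mul_smul, Matrix.one_mul, smul_smul, mul_inv_cancel₀ hc.ne']
    simp
  -- Woodbury-type identity
  set T : Matrix m m ℝ := c⁻¹ • 1 - (c⁻¹ * c⁻¹) • (H * A⁻¹ * Hᵀ) with hTdef
  have hPA : P * (Hᵀ * H) = c • (P * A) - c • 1 := by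
    rw [hAdef, Matrix.mul_add, Matrix.mul_smul, Matrix.mul_nonsing_inv _ hPdet, smul_add,
      smul_smul, mul_inv_cancel₀ hc.ne', one_smul]
    abel
  have hMA : (H * P * Hᵀ) * (H * A⁻¹ * Hᵀ) = c • (H * P * Hᵀ) - c • (H * A⁻¹ * Hᵀ) := by
    calc (H * P * Hᵀ) * (H * A⁻¹ * Hᵀ) = H * (P * (Hᵀ * H) * A⁻¹) * Hᵀ := by
          simp only [Matrix.mul_assoc]
      _ = H * ((c • (P * A) - c • 1) * A⁻¹) * Hᵀ := by rw [hPA]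
      _ = H * (c • P - c • A⁻¹) * Hᵀ := by
          rw [Matrix.sub_mul, Matrix.smul_mul, Matrix.smul_mul, Matrix.one_mul,
            Matrix.mul_assoc P A A⁻¹, Matrix.mul_nonsing_inv _ hAdet, Matrix.mul_one]
      _ = c • (H * P * Hᵀ) - c • (H * A⁻¹ * Hᵀ) := by
          rw [Matrix.mul_sub, Matrix.sub_mul, Matrix.mul_smul, Matrix.smul_mul,
            Matrix.mul_smul, Matrix.smul_mul]
  have hST : S * T = 1 := by
    rw [hSdef, hTdef, Matrix.add_mul, Matrix.mul_sub, Matrix.mul_sub,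
      Matrix.mul_smul, Matrix.mul_smul, Matrix.mul_smul, Matrix.mul_smul,
      Matrix.mul_one, Matrix.smul_mul, Matrix.one_mul, hMA]
    simp only [Matrix.smul_mul, Matrix.one_mul, smul_sub, smul_smul]
    rw [show c⁻¹ * c⁻¹ * c = c⁻¹ by field_simp, show c⁻¹ * c = 1 by field_simp, one_smul]
    abel
  have hSinv : S⁻¹ = T := Matrix.inv_eq_right_inv hST
  -- determinant identity
  have hdetS : S.det = c ^ Fintype.card m * (P.det * A.det) := by
    have h1 : S = c • (1 + (c⁻¹ • (H * P)) * Hᵀ) := by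
      rw [smul_add, Matrix.smul_mul, smul_smul, mul_inv_cancel₀ hc.ne', one_smul, hSdef]
      abel
    rw [h1, Matrix.det_smul, Matrix.det_one_add_mul_comm]
    congr 1
    have h2 : 1 + Hᵀ * (c⁻¹ • (H * P)) = A * P := by
      rw [hAdef, Matrix.add_mul, Matrix.nonsing_inv_mul _ hPdet, Matrix.mul_smul,
        Matrix.smul_mul, Matrix.mul_assoc]
    rw [h2, Matrix.det_mul, mul_comm]
  -- vectors
  set r : m → ℝ := y - H.mulVec m₀ with hrdef
  set b : n → ℝ := c⁻¹ • (Hᵀ.mulVec r) with hbdef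
  set μ : n → ℝ := A⁻¹.mulVec b with hμdef
  have hAμ : A.mulVec μ = b := by
    rw [hμdef, Matrix.mulVec_mulVec, Matrix.mul_nonsing_inv _ hAdet, Matrix.one_mulVec]
  set K : ℝ := ((2 * Real.pi) • (c • (1 : Matrix m m ℝ))).det ^ (-(1:ℝ)/2) *
      ((2 * Real.pi) • P).det ^ (-(1:ℝ)/2) *
      Real.exp ((1/2) * (b ⬝ᵥ A⁻¹.mulVec b) - (1/2) * (c⁻¹ * (r ⬝ᵥ r))) with hKdef
  have hpoint : ∀ z : n → ℝ,
      gaussianDensityN y (H.mulVec z) (c • 1) * gaussianDensityN z m₀ P =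
      K * Real.exp (-(1/2) * ((z - (m₀ + μ)) ⬝ᵥ A.mulVec (z - (m₀ + μ)))) := by
    intro z
    unfold gaussianDensityN
    rw [hcinv, hKdef]
    set w : n → ℝ := z - m₀ with hw
    have hyz : y - H.mulVec z = r - H.mulVec w := by
      rw [hw, hrdef, Matrix.mulVec_sub]
      abel
    have hz0 : z - (m₀ + μ) = w - μ := by rw [hw]; abel
    rw [hyz, hz0]
    -- exponent identity
    have hexp : -(1/2 : ℝ) * ((r - H.mulVec w) ⬝ᵥ (c⁻¹ • (1 : Matrix m m ℝ)).mulVec (r - H.mulVec w))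
          + -(1/2) * (w ⬝ᵥ P⁻¹.mulVec w)
        = ((1/2) * (b ⬝ᵥ A⁻¹.mulVec b) - (1/2) * (c⁻¹ * (r ⬝ᵥ r)))
          + -(1/2) * ((w - μ) ⬝ᵥ A.mulVec (w - μ)) := by
      have h3 : (H.mulVec w) ⬝ᵥ (H.mulVec w) = w ⬝ᵥ (Hᵀ * H).mulVec w := by
        rw [Matrix.dotProduct_mulVec, ← Matrix.mulVec_transpose, Matrix.mulVec_mulVec,
          dotProduct_comm]
      have h4 : r ⬝ᵥ (H.mulVec w) = (Hᵀ.mulVec r) ⬝ᵥ w := by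
        rw [Matrix.dotProduct_mulVec, ← Matrix.mulVec_transpose]
      have h4' : (H.mulVec w) ⬝ᵥ r = (Hᵀ.mulVec r) ⬝ᵥ w := by
        rw [dotProduct_comm]; exact h4
      have e3 : b ⬝ᵥ w = c⁻¹ * ((Hᵀ.mulVec r) ⬝ᵥ w) := by
        rw [hbdef, smul_dotProduct, smul_eq_mul]
      have hAw : w ⬝ᵥ A.mulVec w = w ⬝ᵥ P⁻¹.mulVec w + c⁻¹ * (w ⬝ᵥ (Hᵀ * H).mulVec w) := by
        rw [hAdef, Matrix.add_mulVec, Matrix.smul_mulVec, dotProduct_add,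
          dotProduct_smul, smul_eq_mul]
      have hμAw : μ ⬝ᵥ A.mulVec w = b ⬝ᵥ w := by
        rw [Matrix.dotProduct_mulVec, ← Matrix.mulVec_transpose, hAsymm, hAμ]
      have hwAμ : w ⬝ᵥ A.mulVec μ = b ⬝ᵥ w := by
        rw [hAμ, dotProduct_comm]
      have hμAμ : μ ⬝ᵥ A.mulVec μ = b ⬝ᵥ A⁻¹.mulVec b := by
        rw [hAμ, dotProduct_comm, hμdef]
      simp only [Matrix.smul_mulVec, Matrix.one_mulVec, dotProduct_smul,
        smul_eq_mul, Matrix.mulVec_sub, dotProduct_sub, sub_dotProduct]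
      rw [h3, h4, h4', hμAw, hwAμ, hμAμ, hAw, e3]
      ring
    rw [mul_mul_mul_comm, ← Real.exp_add, hexp, Real.exp_add]
    ring
  simp only [hpoint]
  rw [MeasureTheory.integral_const_mul]
  rw [show (fun z : n → ℝ => Real.exp (-(1/2) * ((z - (m₀ + μ)) ⬝ᵥ A.mulVec (z - (m₀ + μ))))) =
      (fun z : n → ℝ => (fun v : n → ℝ => Real.exp (-(1/2) * (v ⬝ᵥ A.mulVec v))) (z - (m₀ + μ)))
      from rfl,
    MeasureTheory.integral_sub_right_eq_self (fun v : n → ℝ =>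
      Real.exp (-(1/2) * (v ⬝ᵥ A.mulVec v))) (m₀ + μ)]
  rw [integral_exp_neg_half_quad A hA]
  -- right-hand side
  unfold gaussianDensityN
  rw [hSinv]
  have hrT : r ⬝ᵥ T.mulVec r = c⁻¹ * (r ⬝ᵥ r) - b ⬝ᵥ A⁻¹.mulVec b := by
    have q1 : r ⬝ᵥ (H * A⁻¹ * Hᵀ).mulVec r =
        (Hᵀ.mulVec r) ⬝ᵥ A⁻¹.mulVec (Hᵀ.mulVec r) := by
      rw [← Matrix.mulVec_mulVec, ← Matrix.mulVec_mulVec, Matrix.dotProduct_mulVec,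
        ← Matrix.mulVec_transpose]
    have q2 : b ⬝ᵥ A⁻¹.mulVec b =
        c⁻¹ * (c⁻¹ * ((Hᵀ.mulVec r) ⬝ᵥ A⁻¹.mulVec (Hᵀ.mulVec r))) := by
      rw [hbdef, smul_dotProduct, Matrix.mulVec_smul, dotProduct_smul,
        smul_eq_mul, smul_eq_mul]
    rw [hTdef, Matrix.sub_mulVec, Matrix.smul_mulVec, Matrix.one_mulVec,
      dotProduct_sub, dotProduct_smul, Matrix.smul_mulVec,
      dotProduct_smul, smul_eq_mul, smul_eq_mul, q1, q2]
    ring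
  rw [hrT]
  -- prefactor identity
  have hpi : (0:ℝ) < 2 * Real.pi := by positivity
  have hpref : ((2 * Real.pi) • S).det ^ (-(1:ℝ)/2) =
      ((2 * Real.pi) • (c • (1 : Matrix m m ℝ))).det ^ (-(1:ℝ)/2) *
      ((2 * Real.pi) • P).det ^ (-(1:ℝ)/2) *
      Real.sqrt ((2 * Real.pi) ^ Fintype.card n / A.det) := by
    have hd1 : ((2 * Real.pi) • (c • (1 : Matrix m m ℝ))).det =
        (2 * Real.pi * c) ^ Fintype.card m := by
      rw [smul_smul, Matrix.det_smul, Matrix.det_one, mul_one]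
    have hd2 : ((2 * Real.pi) • P).det = (2 * Real.pi) ^ Fintype.card n * P.det :=
      Matrix.det_smul P _
    have hd3 : ((2 * Real.pi) • S).det =
        (2 * Real.pi * c) ^ Fintype.card m * (P.det * A.det) := by
      rw [Matrix.det_smul, hdetS, mul_pow]
      ring
    rw [hd1, hd2, hd3]
    have h2c : (0:ℝ) < 2 * Real.pi * c := by positivity
    have hPd := hP.det_pos
    have hAd := hA.det_pos
    -- prove by squaring
    have hL : (0:ℝ) ≤ ((2 * Real.pi * c) ^ Fintype.card m : ℝ) ^ (-(1:ℝ)/2) *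
        ((2 * Real.pi) ^ Fintype.card n * P.det) ^ (-(1:ℝ)/2) *
        Real.sqrt ((2 * Real.pi) ^ Fintype.card n / A.det) := by positivity
    have hR : (0:ℝ) ≤ (((2 * Real.pi * c) ^ Fintype.card m * (P.det * A.det) : ℝ)) ^ (-(1:ℝ)/2) := by
      positivity
    have hsq : ∀ x : ℝ, 0 < x → (x ^ (-(1:ℝ)/2)) ^ 2 = x⁻¹ := by
      intro x hx
      rw [← Real.rpow_natCast (x ^ (-(1:ℝ)/2)) 2, ← Real.rpow_mul hx.le]
      norm_num
      exact Real.rpow_neg_one x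
    have key : ((((2 * Real.pi * c) ^ Fintype.card m : ℝ) ^ (-(1:ℝ)/2) *
        ((2 * Real.pi) ^ Fintype.card n * P.det) ^ (-(1:ℝ)/2) *
        Real.sqrt ((2 * Real.pi) ^ Fintype.card n / A.det)) : ℝ) ^ 2 =
        ((((2 * Real.pi * c) ^ Fintype.card m * (P.det * A.det) : ℝ)) ^ (-(1:ℝ)/2)) ^ 2 := by
      rw [mul_pow, mul_pow, hsq _ (by positivity), hsq _ (by positivity),
        hsq _ (by positivity), Real.sq_sqrt (by positivity)]
      field_simp
    calc (((2 * Real.pi * c) ^ Fintype.card m * (P.det * A.det) : ℝ)) ^ (-(1:ℝ)/2)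
        = Real.sqrt (((((2 * Real.pi * c) ^ Fintype.card m * (P.det * A.det) : ℝ)) ^ (-(1:ℝ)/2)) ^ 2) := by
          rw [Real.sqrt_sq hR]
      _ = Real.sqrt ((((2 * Real.pi * c) ^ Fintype.card m : ℝ) ^ (-(1:ℝ)/2) *
            ((2 * Real.pi) ^ Fintype.card n * P.det) ^ (-(1:ℝ)/2) *
            Real.sqrt ((2 * Real.pi) ^ Fintype.card n / A.det)) ^ 2) := by rw [key]
      _ = _ := Real.sqrt_sq hL
  rw [hpref, hKdef]
  rw [show -(1/2 : ℝ) * (c⁻¹ * (r ⬝ᵥ r) - b ⬝ᵥ A⁻¹.mulVec b) =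
      (1/2) * (b ⬝ᵥ A⁻¹.mulVec b) - (1/2) * (c⁻¹ * (r ⬝ᵥ r)) by ring]
  ring
end

section
/- Let n be a finite index type and let F, Σ, G be n×n real matrices with F·Σ + Σ·Fᵀ + G = 0 (the continuous Lyapunov equation). Then for every Δ ≥ 0, ∫₀^Δ exp((Δ − τ)·F) · G · exp((Δ − τ)·Fᵀ) dτ = Σ − exp(Δ·F) · Σ · exp(Δ·Fᵀ), where exp denotes the matrix exponential and the integral is the (entrywise) interval integral over τ ∈ [0, Δ]. -/
open Matrix

section aux

attribute [local instance] Matrix.linftyOpNormedRing Matrix.linftyOpNormedAlgebra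

variable {n : Type*} [Fintype n] [DecidableEq n]

private lemma aux_hasDerivAt (F S : Matrix n n ℝ) (Δ τ : ℝ) :
    HasDerivAt (fun τ : ℝ => NormedSpace.exp ((Δ - τ) • F) * S * NormedSpace.exp ((Δ - τ) • Fᵀ))
      (NormedSpace.exp ((Δ - τ) • F) * (-(F * S + S * Fᵀ)) * NormedSpace.exp ((Δ - τ) • Fᵀ)) τ := by
  have hs : HasDerivAt (fun τ : ℝ => Δ - τ) (-1) τ := by
    simpa using (hasDerivAt_id τ).const_sub Δ
  have hA : HasDerivAt (fun τ : ℝ => NormedSpace.exp ((Δ - τ) • F))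
      (-(F * NormedSpace.exp ((Δ - τ) • F))) τ := by
    have h' := (hasDerivAt_exp_smul_const' F (Δ - τ)).scomp τ hs
    simp only [neg_smul, one_smul, Function.comp_def] at h'
    exact h'
  have hB : HasDerivAt (fun τ : ℝ => NormedSpace.exp ((Δ - τ) • Fᵀ))
      (-(NormedSpace.exp ((Δ - τ) • Fᵀ) * Fᵀ)) τ := by
    have h' := (hasDerivAt_exp_smul_const Fᵀ (Δ - τ)).scomp τ hs
    simp only [neg_smul, one_smul, Function.comp_def] at h'
    exact h'
  have h := (hA.mul_const S).mul hB
  have hcomm : F * NormedSpace.exp ((Δ - τ) • F) = NormedSpace.exp ((Δ - τ) • F) * F :=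
    (((Commute.refl F).smul_left (Δ - τ)).exp_left).symm
  have hcomm' : Fᵀ * NormedSpace.exp ((Δ - τ) • Fᵀ) = NormedSpace.exp ((Δ - τ) • Fᵀ) * Fᵀ :=
    (((Commute.refl Fᵀ).smul_left (Δ - τ)).exp_left).symm
  convert h using 1
  case e'_9 =>
    rw [hcomm, ← hcomm']
    noncomm_ring
  all_goals rfl

private lemma aux_entry_hasDerivAt (i j : n) (f : ℝ → Matrix n n ℝ) (f' : Matrix n n ℝ) (τ : ℝ)
    (h : HasDerivAt f f' τ) : HasDerivAt (fun τ => f τ i j) (f' i j) τ := by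
  let L : Matrix n n ℝ →L[ℝ] ℝ :=
    ⟨Matrix.entryLinearMap ℝ ℝ i j, (Matrix.entryLinearMap ℝ ℝ i j).continuous_of_finiteDimensional⟩
  exact L.hasFDerivAt.comp_hasDerivAt τ h

private lemma aux_entry_continuous (i j : n) (f : ℝ → Matrix n n ℝ) (h : Continuous f) :
    Continuous (fun τ => f τ i j) :=
  ((Matrix.entryLinearMap ℝ ℝ i j).continuous_of_finiteDimensional).comp h

private lemma aux_exp_cont (F : Matrix n n ℝ) (Δ : ℝ) :
    Continuous fun τ : ℝ => NormedSpace.exp ((Δ - τ) • F) :=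
  NormedSpace.exp_continuous.comp (((continuous_const.sub continuous_id).smul continuous_const))

end aux

/-- **Process-noise covariance via the Lyapunov equation (Appendix D.2).**
If `FΣ + ΣFᵀ + G = 0`, then for every `Δ ≥ 0` the (entrywise) interval integral
`∫₀^Δ e^{(Δ−τ)F} G e^{(Δ−τ)Fᵀ} dτ` equals `Σ − e^{ΔF} Σ e^{ΔFᵀ}`. -/
theorem stmt15 {n : Type*} [Fintype n] [DecidableEq n]
    (F S G : Matrix n n ℝ) (hLyap : F * S + S * Fᵀ + G = 0)
    (Δ : ℝ) (hΔ : 0 ≤ Δ) :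
    (Matrix.of fun i j =>
        ∫ τ in (0 : ℝ)..Δ,
          (NormedSpace.exp ((Δ - τ) • F) * G * NormedSpace.exp ((Δ - τ) • Fᵀ)) i j) =
      S - NormedSpace.exp (Δ • F) * S * NormedSpace.exp (Δ • Fᵀ) := by
  letI := Matrix.linftyOpNormedRing (α := ℝ) (n := n)
  letI := Matrix.linftyOpNormedAlgebra (R := ℝ) (α := ℝ) (n := n)
  have hG : G = -(F * S + S * Fᵀ) := eq_neg_of_add_eq_zero_right hLyap
  ext i j
  simp only [Matrix.of_apply]
  set φ : ℝ → ℝ := fun τ =>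
    (NormedSpace.exp ((Δ - τ) • F) * S * NormedSpace.exp ((Δ - τ) • Fᵀ)) i j with hφ
  have key : ∫ τ in (0:ℝ)..Δ,
      (NormedSpace.exp ((Δ - τ) • F) * G * NormedSpace.exp ((Δ - τ) • Fᵀ)) i j
      = φ Δ - φ 0 := by
    apply intervalIntegral.integral_eq_sub_of_hasDerivAt
    · intro τ _
      have := aux_entry_hasDerivAt i j _ _ τ (aux_hasDerivAt F S Δ τ)
      rw [hG]
      exact this
    · apply Continuous.intervalIntegrable
      exact aux_entry_continuous i j _
        (((aux_exp_cont F Δ).mul continuous_const).mul (aux_exp_cont Fᵀ Δ))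
  rw [key, hφ]
  simp [Matrix.sub_apply]
end

section
/- Let p : ℝ → (0, ∞) be a differentiable probability density with score s(y) := p'(y)/p(y), let w : ℝ → ℝ be differentiable, fix f ∈ ℝ and σ ≠ 0, and let s_f(y) := (f − y)/σ². Assume that (i) the function y ↦ w(y)²·s_f(y)·p(y) tends to 0 as y → +∞ and as y → −∞, and (ii) the functions y ↦ w(y)²·s_f(y)²·p(y), y ↦ w(y)²·s_f(y)·s(y)·p(y), y ↦ w(y)²·s(y)²·p(y), and y ↦ (d/dy)(w(y)²·s_f(y))·p(y) are all Lebesgue integrable on ℝ. Then ∫ w(y)²·(s_f(y) − s(y))²·p(y) dy = ∫ (w(y)²·s_f(y)² + 2·(d/dy)(w(y)²·s_f(y)))·p(y) dy + ∫ w(y)²·s(y)²·p(y) dy; that is, the weighted Fisher divergence between the Gaussian model score s_f and the data score s equals, up to an additive constant not depending on f, the weighted score-matching loss E[w² s_f² + 2 (w² s_f)']. -/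
open MeasureTheory Filter

/-- **Weighted Fisher divergence equals the weighted score-matching loss up to a
constant (Appendix A).** For a differentiable positive density `p` with score
`s = p'/p`, a differentiable weight `w`, and the Gaussian score `s_f(y) = (f−y)/σ²`,
under boundary decay of `w² s_f p` and integrability assumptions,
`∫ w²(s_f − s)² p = ∫ (w² s_f² + 2 (w² s_f)') p + ∫ w² s² p`. -/
theorem stmt16 (p : ℝ → ℝ) (hp_pos : ∀ y, 0 < p y) (hp_diff : Differentiable ℝ p)
    (hp_prob : ∫ y, p y = 1)
    (w : ℝ → ℝ) (hw : Differentiable ℝ w)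
    (f σ : ℝ) (hσ : σ ≠ 0)
    (s : ℝ → ℝ) (hs : s = fun y => deriv p y / p y)
    (sf : ℝ → ℝ) (hsf : sf = fun y => (f - y) / σ ^ 2)
    (hdecay_top : Tendsto (fun y => (w y) ^ 2 * sf y * p y) atTop (nhds 0))
    (hdecay_bot : Tendsto (fun y => (w y) ^ 2 * sf y * p y) atBot (nhds 0))
    (hi1 : Integrable (fun y => (w y) ^ 2 * (sf y) ^ 2 * p y))
    (hi2 : Integrable (fun y => (w y) ^ 2 * sf y * s y * p y))
    (hi3 : Integrable (fun y => (w y) ^ 2 * (s y) ^ 2 * p y))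
    (hi4 : Integrable (fun y => deriv (fun t => (w t) ^ 2 * sf t) y * p y)) :
    ∫ y, (w y) ^ 2 * (sf y - s y) ^ 2 * p y =
      (∫ y, ((w y) ^ 2 * (sf y) ^ 2 + 2 * deriv (fun t => (w t) ^ 2 * sf t) y) * p y) +
        ∫ y, (w y) ^ 2 * (s y) ^ 2 * p y := by
  set g : ℝ → ℝ := fun t => (w t) ^ 2 * sf t with hg
  have hsf_diff : Differentiable ℝ sf := by
    rw [hsf]; exact (differentiable_const f |>.sub differentiable_id).div_const _
  have hg_diff : Differentiable ℝ g := ((hw.pow 2).mul hsf_diff)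
  -- key integration by parts: ∫ g' p = - ∫ g s p
  have hsp : ∀ y, s y * p y = deriv p y := by
    intro y; rw [hs]; field_simp [(hp_pos y).ne']
  have hF : ∀ x, HasDerivAt (fun y => g y * p y)
      (deriv g x * p x + g x * (s x * p x)) x := by
    intro x
    rw [hsp x]
    exact ((hg_diff x).hasDerivAt).mul ((hp_diff x).hasDerivAt)
  have hi2' : Integrable (fun y => g y * (s y * p y)) := by
    refine hi2.congr ?_
    filter_upwards with y
    ring
  have hF' : Integrable (fun x => deriv g x * p x + g x * (s x * p x)) := hi4.add hi2'
  have hzero : ∫ x, (deriv g x * p x + g x * (s x * p x)) = 0 := by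
    have := integral_of_hasDerivAt_of_tendsto hF hF' hdecay_bot hdecay_top
    simpa using this
  have hibp : ∫ y, g y * (s y * p y) = - ∫ y, deriv g y * p y := by
    rw [integral_add hi4 hi2'] at hzero
    linarith
  have hibp' : ∫ y, (w y) ^ 2 * sf y * s y * p y = - ∫ y, deriv g y * p y := by
    rw [← hibp]
    congr 1 with y
    ring
  -- expand the square
  have hexp : (fun y => (w y) ^ 2 * (sf y - s y) ^ 2 * p y)
      = fun y => ((w y) ^ 2 * (sf y) ^ 2 * p y - 2 * ((w y) ^ 2 * sf y * s y * p y))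
        + (w y) ^ 2 * (s y) ^ 2 * p y := by
    funext y; ring
  have hL : ∫ y, (w y) ^ 2 * (sf y - s y) ^ 2 * p y
      = ((∫ y, (w y) ^ 2 * (sf y) ^ 2 * p y)
          - 2 * ∫ y, (w y) ^ 2 * sf y * s y * p y)
        + ∫ y, (w y) ^ 2 * (s y) ^ 2 * p y := by
    have e1 := integral_add (μ := volume) (hi1.sub (hi2.const_mul 2)) hi3
    simp only [Pi.add_apply, Pi.sub_apply] at e1
    have e2 := integral_sub hi1 (hi2.const_mul 2)
    rw [hexp, e1, e2, integral_const_mul]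
  have hi4' : Integrable (fun y => 2 * deriv g y * p y) := by
    refine (hi4.const_mul 2).congr ?_
    filter_upwards with y
    ring
  have hR : ∫ y, ((w y) ^ 2 * (sf y) ^ 2 + 2 * deriv g y) * p y
      = (∫ y, (w y) ^ 2 * (sf y) ^ 2 * p y) + 2 * ∫ y, deriv g y * p y := by
    have : (fun y => ((w y) ^ 2 * (sf y) ^ 2 + 2 * deriv g y) * p y)
        = fun y => (w y) ^ 2 * (sf y) ^ 2 * p y + 2 * (deriv g y * p y) := by
      funext y; ring
    have e3 := integral_add (μ := volume) hi1 (hi4.const_mul 2)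
    rw [this, e3, integral_const_mul]
  rw [hL, hR, hibp']
  ring
end
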